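/- Let 0 < D_i, D_j ≤ 1 and 0 < D_ij ≤ min(D_i, D_j). Setting d_{L(Γi)} = D_i, d_{L(Γj)} = D_j, and d_{max{L(Γi),L(Γj)}} = min(D_i, D_j), the following inequality holds: (1/2)·log[ ((1+D_i)/(2D_i)) · ((1+D_j)/(2D_j)) · ((D_ij + min(D_i,D_j)) / ((1 + min(D_i,D_j))·D_ij)) ] ≥ min( (1/2)log(1/D_i), (1/2)log(1/D_j) ) + (1/2)log(1/D_ij) − 1. -/

import Mathlib

theorem stmt_8 (Di Dj Dij : ℝ)
    (hDi : 0 < Di) (hDi1 : Di ≤ 1) (hDj : 0 < Dj) (hDj1 : Dj ≤ 1)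
    (hDij : 0 < Dij) (hle : Dij ≤ min Di Dj) :
    (1 / 2) * Real.logb 2
        (((1 + Di) / (2 * Di)) * ((1 + Dj) / (2 * Dj)) *
          ((Dij + min Di Dj) / ((1 + min Di Dj) * Dij))) ≥
      min ((1 / 2) * Real.logb 2 (1 / Di)) ((1 / 2) * Real.logb 2 (1 / Dj)) +
        (1 / 2) * Real.logb 2 (1 / Dij) - 1 := by
  set m := min Di Dj with hm
  set M := max Di Dj with hM
  have hm0 : 0 < m := lt_min hDi hDj
  have hM0 : 0 < M := lt_of_lt_of_le hDi (le_max_left _ _)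
  have hmM : m * M = Di * Dj := min_mul_max Di Dj
  have hmDi : m ≤ Di := min_le_left _ _
  have hmDj : m ≤ Dj := min_le_right _ _
  -- Step 1: min of the two logs is ≤ (1/2) logb 2 (1/M)
  have hmin : min ((1 / 2) * Real.logb 2 (1 / Di)) ((1 / 2) * Real.logb 2 (1 / Dj))
      ≤ (1 / 2) * Real.logb 2 (1 / M) := by
    rcases max_choice Di Dj with h | h
    · rw [hM, h]; exact min_le_left _ _
    · rw [hM, h]; exact min_le_right _ _
  -- key numeric inequality
  have hP : 1 / (4 * M * Dij) ≤ ((1 + Di) / (2 * Di)) * ((1 + Dj) / (2 * Dj)) *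
      ((Dij + m) / ((1 + m) * Dij)) := by
    rw [div_mul_div_comm, div_mul_div_comm, div_le_div_iff₀ (by positivity) (by positivity)]
    have h1 : 1 + m ≤ (1 + Di) * (1 + Dj) := by nlinarith [mul_pos hDi hDj]
    have key : m * (1 + m) ≤ (1 + Di) * (1 + Dj) * (Dij + m) := by
      nlinarith [mul_le_mul_of_nonneg_right h1 (by positivity : (0:ℝ) ≤ Dij + m),
        mul_pos (by linarith : (0:ℝ) < 1 + m) hDij]
    have heq : 1 * (2 * Di * (2 * Dj) * ((1 + m) * Dij)) = (m * (1 + m)) * (4 * M * Dij) := by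
      linear_combination (-4 * (1 + m) * Dij) * hmM
    rw [heq]
    exact mul_le_mul_of_nonneg_right key (by positivity)
  have hPpos : (0:ℝ) < 1 / (4 * M * Dij) := by positivity
  have hlog : Real.logb 2 (1 / (4 * M * Dij)) ≤
      Real.logb 2 (((1 + Di) / (2 * Di)) * ((1 + Dj) / (2 * Dj)) *
        ((Dij + m) / ((1 + m) * Dij))) :=
    (Real.logb_le_logb (by norm_num) hPpos (lt_of_lt_of_le hPpos hP)).mpr hP
  -- rewrite logb of the product
  have hsplit : Real.logb 2 (1 / (4 * M * Dij)) =
      Real.logb 2 (1 / M) + Real.logb 2 (1 / Dij) - 2 := by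
    have h4 : (1:ℝ) / (4 * M * Dij) = (1 / M) * (1 / Dij) * (1 / 4) := by
      field_simp
    rw [h4, Real.logb_mul (by positivity) (by norm_num),
      Real.logb_mul (by positivity) (by positivity)]
    have : Real.logb 2 (1 / 4) = -2 := by
      rw [show (1:ℝ)/4 = (2:ℝ) ^ (-2 : ℝ) by
          rw [Real.rpow_neg (by norm_num)]; norm_num,
        Real.logb_rpow (by norm_num) (by norm_num)]
    rw [this]; ring
  have := hlog
  rw [hsplit] at this
  calc min ((1 / 2) * Real.logb 2 (1 / Di)) ((1 / 2) * Real.logb 2 (1 / Dj)) +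
        (1 / 2) * Real.logb 2 (1 / Dij) - 1
      ≤ (1 / 2) * Real.logb 2 (1 / M) + (1 / 2) * Real.logb 2 (1 / Dij) - 1 := by
        linarith
    _ = (1 / 2) * (Real.logb 2 (1 / M) + Real.logb 2 (1 / Dij) - 2) := by ring
    _ ≤ (1 / 2) * Real.logb 2 (((1 + Di) / (2 * Di)) * ((1 + Dj) / (2 * Dj)) *
          ((Dij + m) / ((1 + m) * Dij))) := by linarith
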